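/- (Example: linear demands with shifts, monotonically good case.) Let 0 < a_1 < a_2 and c_1, c_2 ≥ 0, and let I ⊆ (0,∞) be an open interval containing [a_1/2, a_2/2] on which D_1(p) := a_1 − p + c_1/p and D_2(p) := a_2 − p + c_2/p are both positive. Then R_i(p) := p·D_i(p) = a_i·p − p² + c_i satisfies R_i''(p) = −2 < 0 with monopoly prices a_i/2, so with (L,H) = (1,2) this is a binary monopoly model. If c_1 − c_2 ≥ (a_2 − a_1)·a_2/2, then for every α ∈ (0,1] the value function W^α is convex on [0,1]. -/

import Mathlib

open Set

noncomputable section Stmt9Aux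

noncomputable section Stmt9Aux

/-- price path -/
def tf (a1 a2 μ : ℝ) : ℝ := (a1 + μ*(a2-a1))/2

/-- affine interpolation -/
def af (u v μ : ℝ) : ℝ := (1-μ)*u + μ*v

/-- value function, explicit form -/
def gf (a1 a2 c1 c2 α k1 k2 μ : ℝ) : ℝ :=
  (1 - 5*α/2) * (tf a1 a2 μ)^2 - α * af c1 c2 μ * Real.log (tf a1 a2 μ)
    + (1-α) * af c1 c2 μ + α * af k1 k2 μ

def gf' (a1 a2 c1 c2 α k1 k2 μ : ℝ) : ℝ :=
  (1 - 5*α/2) * ((a2-a1) * tf a1 a2 μ) - α*(c2-c1) * Real.log (tf a1 a2 μ)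
    - α * af c1 c2 μ * ((a2-a1)/2) / tf a1 a2 μ + (1-α)*(c2-c1) + α*(k2-k1)

def gf'' (a1 a2 c1 c2 α μ : ℝ) : ℝ :=
  (1 - 5*α/2) * ((a2-a1)^2/2) - α*(c2-c1)*(a2-a1) / tf a1 a2 μ
    + α * af c1 c2 μ * ((a2-a1)^2/4) / (tf a1 a2 μ)^2

theorem tf_deriv (a1 a2 μ : ℝ) : HasDerivAt (tf a1 a2) ((a2-a1)/2) μ := by
  unfold tf
  simpa using (((hasDerivAt_id μ).mul_const (a2-a1)).const_add a1).div_const 2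

theorem af_deriv (u v μ : ℝ) : HasDerivAt (af u v) (v - u) μ := by
  unfold af
  have h := (((hasDerivAt_id μ).const_sub 1).mul_const u).add ((hasDerivAt_id μ).mul_const v)
  exact h.congr_deriv (by ring)

theorem gf_hasDeriv (a1 a2 c1 c2 α k1 k2 μ : ℝ) (ht : 0 < tf a1 a2 μ) :
    HasDerivAt (gf a1 a2 c1 c2 α k1 k2) (gf' a1 a2 c1 c2 α k1 k2 μ) μ := by
  have h1 : HasDerivAt (fun μ => (tf a1 a2 μ)^2) (2 * tf a1 a2 μ * ((a2-a1)/2)) μ := by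
    simpa using (tf_deriv a1 a2 μ).fun_pow 2
  have h2 : HasDerivAt (fun μ => Real.log (tf a1 a2 μ)) (((a2-a1)/2) / tf a1 a2 μ) μ :=
    (tf_deriv a1 a2 μ).log ht.ne'
  have h3 : HasDerivAt (fun μ => α * af c1 c2 μ) (α*(c2-c1)) μ := (af_deriv c1 c2 μ).const_mul α
  have H := (((h1.const_mul (1 - 5*α/2)).sub (h3.mul h2)).add
    ((af_deriv c1 c2 μ).const_mul (1-α))).add ((af_deriv k1 k2 μ).const_mul α)
  have heq : gf' a1 a2 c1 c2 α k1 k2 μ =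
      (1 - 5*α/2) * (2 * tf a1 a2 μ * ((a2-a1)/2)) -
        (α*(c2-c1) * Real.log (tf a1 a2 μ) + α * af c1 c2 μ * (((a2-a1)/2) / tf a1 a2 μ))
        + (1-α)*(c2-c1) + α*(k2-k1) := by
    unfold gf'
    field_simp
    ring
  rw [heq]
  exact H

theorem gf'_hasDeriv (a1 a2 c1 c2 α k1 k2 μ : ℝ) (ht : 0 < tf a1 a2 μ) :
    HasDerivAt (gf' a1 a2 c1 c2 α k1 k2) (gf'' a1 a2 c1 c2 α μ) μ := by
  have ht' := tf_deriv a1 a2 μ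
  have u1 := (ht'.const_mul (a2-a1)).const_mul (1 - 5*α/2)
  have u2 := (ht'.log ht.ne').const_mul (α*(c2-c1))
  have u3 := (((af_deriv c1 c2 μ).const_mul α).mul_const ((a2-a1)/2)).div ht' ht.ne'
  have H := (((u1.sub u2).sub u3).add_const ((1-α)*(c2-c1))).add_const (α*(k2-k1))
  have heq : gf'' a1 a2 c1 c2 α μ =
      (1 - 5*α/2) * ((a2-a1) * ((a2-a1)/2)) - α*(c2-c1) * (((a2-a1)/2) / tf a1 a2 μ)
        - (α * (c2-c1) * ((a2-a1)/2) * tf a1 a2 μ -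
            α * af c1 c2 μ * ((a2-a1)/2) * ((a2-a1)/2)) / (tf a1 a2 μ)^2 := by
    unfold gf''
    field_simp
    ring
  rw [heq]
  exact H

def Ff (a c q : ℝ) : ℝ := q^2/2 - a*q - c * Real.log q

theorem Ff_hasDeriv (a c q : ℝ) (hq : q ≠ 0) :
    HasDerivAt (Ff a c) (-(a - q + c / q)) q := by
  unfold Ff
  have h := (((hasDerivAt_pow 2 q).div_const 2).sub ((hasDerivAt_id q).const_mul a)).sub
    ((Real.hasDerivAt_log hq).const_mul c)
  exact h.congr_deriv (by simp only [Nat.cast_ofNat]; field_simp; ring)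

theorem gf''_nonneg {a1 a2 c1 c2 α : ℝ} (ha1 : 0 < a1) (ha12 : a1 < a2)
    (hc1 : 0 ≤ c1) (hc2 : 0 ≤ c2) (hα0 : 0 < α) (hα1 : α ≤ 1)
    (hgood : c1 - c2 ≥ (a2 - a1) * a2 / 2) {μ : ℝ} (hμ : μ ∈ Icc (0:ℝ) 1) :
    0 ≤ gf'' a1 a2 c1 c2 α μ := by
  obtain ⟨hμ0, hμ1⟩ := hμ
  have hd : 0 < a2 - a1 := by linarith
  set T := tf a1 a2 μ with hT
  have hT1 : a1/2 ≤ T := by rw [hT]; unfold tf; nlinarith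
  have hT2 : T ≤ a2/2 := by rw [hT]; unfold tf; nlinarith
  have hT0 : 0 < T := by linarith
  set C := af c1 c2 μ with hC
  have hC0 : 0 ≤ C := by rw [hC]; unfold af; nlinarith
  have hrw : gf'' a1 a2 c1 c2 α μ =
      ((1 - 5*α/2) * ((a2-a1)^2/2) * T^2 - α*(c2-c1)*(a2-a1)*T
        + α * C * ((a2-a1)^2/4)) / T^2 := by
    unfold gf''
    rw [← hT, ← hC]
    field_simp
  rw [hrw]
  apply div_nonneg _ (sq_nonneg T)
  have P1 : 0 ≤ α * (a2-a1) * T * ((c1-c2) - (a2-a1)*a2/2) := by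
    apply mul_nonneg (by positivity) (by linarith)
  have P2 : 0 ≤ α * (a2-a1) * (a2-a1) * T * (a2 - 2*T) / 2 := by
    apply div_nonneg _ (by norm_num)
    apply mul_nonneg (by positivity) (by linarith)
  have P3 : 0 ≤ (2-α) * ((a2-a1)*T)^2 := by
    apply mul_nonneg (by linarith) (sq_nonneg _)
  have P4 : 0 ≤ α * C * (a2-a1)^2 := by positivity
  nlinarith [P1, P2, P3, P4]

theorem gf_convex {a1 a2 c1 c2 α : ℝ} (k1 k2 : ℝ) (ha1 : 0 < a1) (ha12 : a1 < a2)
    (hc1 : 0 ≤ c1) (hc2 : 0 ≤ c2) (hα0 : 0 < α) (hα1 : α ≤ 1)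
    (hgood : c1 - c2 ≥ (a2 - a1) * a2 / 2) :
    ConvexOn ℝ (Icc (0:ℝ) 1) (gf a1 a2 c1 c2 α k1 k2) := by
  have hd : 0 < a2 - a1 := by linarith
  set S : Set ℝ := Ioi (-a1/(a2-a1)) with hSdef
  have hSopen : IsOpen S := isOpen_Ioi
  have hSpos : ∀ μ ∈ S, 0 < tf a1 a2 μ := by
    intro μ hμ
    have : -a1/(a2-a1) < μ := hμ
    rw [div_lt_iff₀ hd] at this
    unfold tf; nlinarith
  have hsub : Icc (0:ℝ) 1 ⊆ S := by
    intro μ hμ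
    have : -a1/(a2-a1) < 0 := by
      apply div_neg_of_neg_of_pos (by linarith) hd
    exact lt_of_lt_of_le this hμ.1
  have hderiv : ∀ μ ∈ S, deriv (gf a1 a2 c1 c2 α k1 k2) μ = gf' a1 a2 c1 c2 α k1 k2 μ :=
    fun μ hμ => (gf_hasDeriv a1 a2 c1 c2 α k1 k2 μ (hSpos μ hμ)).deriv
  apply convexOn_of_deriv2_nonneg (convex_Icc 0 1)
  · intro x hx
    exact (gf_hasDeriv a1 a2 c1 c2 α k1 k2 x (hSpos x (hsub hx))).continuousAt.continuousWithinAt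
  · intro x hx
    exact (gf_hasDeriv a1 a2 c1 c2 α k1 k2 x
      (hSpos x (hsub (interior_subset hx)))).differentiableAt.differentiableWithinAt
  · intro x hx
    have hxS : x ∈ S := hsub (interior_subset hx)
    have hev : deriv (gf a1 a2 c1 c2 α k1 k2) =ᶠ[nhds x] gf' a1 a2 c1 c2 α k1 k2 := by
      filter_upwards [hSopen.mem_nhds hxS] with y hy
      exact hderiv y hy
    exact ((gf'_hasDeriv a1 a2 c1 c2 α k1 k2 x
      (hSpos x hxS)).differentiableAt.congr_of_eventuallyEq hev).differentiableWithinAt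
  · intro x hx
    have hxS : x ∈ S := hsub (interior_subset hx)
    have hev : deriv (gf a1 a2 c1 c2 α k1 k2) =ᶠ[nhds x] gf' a1 a2 c1 c2 α k1 k2 := by
      filter_upwards [hSopen.mem_nhds hxS] with y hy
      exact hderiv y hy
    have h2 : deriv^[2] (gf a1 a2 c1 c2 α k1 k2) x = gf'' a1 a2 c1 c2 α x := by
      simp only [Function.iterate_succ, Function.iterate_zero, Function.comp_apply, id_eq]
      rw [hev.deriv_eq]
      exact (gf'_hasDeriv a1 a2 c1 c2 α k1 k2 x (hSpos x hxS)).deriv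
    rw [h2]
    rw [interior_Icc] at hx
    exact gf''_nonneg ha1 ha12 hc1 hc2 hα0 hα1 hgood ⟨hx.1.le, hx.2.le⟩

/-- (Example: linear demands with shifts, monotonically good case.)
For `D_i(p) = a_i − p + c_i/p` with `0 < a_1 < a_2`, `c_1, c_2 ≥ 0`: `R_i(p) = a_i p − p² + c_i`,
`R_i'' = −2`, the monopoly prices are `a_i/2`, and if `c_1 − c_2 ≥ (a_2 − a_1)·a_2/2` then
`W^α` is convex on `[0,1]` for every `α ∈ (0,1]`. -/
theorem stmt_9
    (a1 a2 c1 c2 : ℝ) (ha1 : 0 < a1) (ha12 : a1 < a2) (hc1 : 0 ≤ c1) (hc2 : 0 ≤ c2)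
    (I : Set ℝ)
    (hIopen : IsOpen I) (hIconv : Convex ℝ I) (hIpos : I ⊆ Set.Ioi (0:ℝ))
    (hIcc : Set.Icc (a1 / 2) (a2 / 2) ⊆ I)
    (D1 D2 R1 R2 : ℝ → ℝ)
    (hD1 : D1 = fun q => a1 - q + c1 / q) (hD2 : D2 = fun q => a2 - q + c2 / q)
    (hD1pos : ∀ q ∈ I, 0 < D1 q) (hD2pos : ∀ q ∈ I, 0 < D2 q)
    (hR1 : R1 = fun q => q * D1 q) (hR2 : R2 = fun q => q * D2 q)
    (p : ℝ → ℝ)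
    (hp : ∀ μ ∈ Set.Icc (0:ℝ) 1, p μ ∈ Set.Icc (a1 / 2) (a2 / 2) ∧
      (1 - μ) * deriv R1 (p μ) + μ * deriv R2 (p μ) = 0)
    (CS1 CS2 : ℝ → ℝ)
    (hCS1 : ∀ q ∈ I, HasDerivAt CS1 (-(D1 q)) q)
    (hCS2 : ∀ q ∈ I, HasDerivAt CS2 (-(D2 q)) q)
    (W : ℝ → ℝ → ℝ)
    (hW : ∀ α : ℝ, W α = fun μ =>
      (1 - μ) * (α * CS1 (p μ) + (1 - α) * R1 (p μ)) +
        μ * (α * CS2 (p μ) + (1 - α) * R2 (p μ)))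
    (hgood : c1 - c2 ≥ (a2 - a1) * a2 / 2) :
    (∀ q ∈ I, R1 q = a1 * q - q ^ 2 + c1) ∧
    (∀ q ∈ I, R2 q = a2 * q - q ^ 2 + c2) ∧
    (∀ q ∈ I, deriv (deriv R1) q = -2) ∧
    (∀ q ∈ I, deriv (deriv R2) q = -2) ∧
    deriv R1 (a1 / 2) = 0 ∧ deriv R2 (a2 / 2) = 0 ∧
    ∀ α ∈ Set.Ioc (0:ℝ) 1, ConvexOn ℝ (Set.Icc (0:ℝ) 1) (W α) := by
  have ha2 : 0 < a2 := ha1.trans ha12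
  -- polynomial forms
  have hR1poly : ∀ q : ℝ, q ≠ 0 → R1 q = a1 * q - q ^ 2 + c1 := by
    intro q hq; rw [hR1, hD1]; field_simp
  have hR2poly : ∀ q : ℝ, q ≠ 0 → R2 q = a2 * q - q ^ 2 + c2 := by
    intro q hq; rw [hR2, hD2]; field_simp
  -- first derivatives
  have hderivR1 : ∀ q : ℝ, 0 < q → deriv R1 q = a1 - 2*q := by
    intro q hq
    have hev : R1 =ᶠ[nhds q] fun x => a1 * x - x ^ 2 + c1 := by
      filter_upwards [isOpen_Ioi.mem_nhds hq] with x hx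
      exact hR1poly x (ne_of_gt hx)
    rw [hev.deriv_eq]
    have h : HasDerivAt (fun x : ℝ => a1 * x - x ^ 2 + c1) (a1 - 2*q) q := by
      have := (((hasDerivAt_id q).const_mul a1).sub (hasDerivAt_pow 2 q)).add_const c1
      exact this.congr_deriv (by simp)
    exact h.deriv
  have hderivR2 : ∀ q : ℝ, 0 < q → deriv R2 q = a2 - 2*q := by
    intro q hq
    have hev : R2 =ᶠ[nhds q] fun x => a2 * x - x ^ 2 + c2 := by
      filter_upwards [isOpen_Ioi.mem_nhds hq] with x hx
      exact hR2poly x (ne_of_gt hx)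
    rw [hev.deriv_eq]
    have h : HasDerivAt (fun x : ℝ => a2 * x - x ^ 2 + c2) (a2 - 2*q) q := by
      have := (((hasDerivAt_id q).const_mul a2).sub (hasDerivAt_pow 2 q)).add_const c2
      exact this.congr_deriv (by simp)
    exact h.deriv
  -- second derivatives
  have hderiv2R1 : ∀ q : ℝ, 0 < q → deriv (deriv R1) q = -2 := by
    intro q hq
    have hev : deriv R1 =ᶠ[nhds q] fun x => a1 - 2*x := by
      filter_upwards [isOpen_Ioi.mem_nhds hq] with x hx
      exact hderivR1 x hx
    rw [hev.deriv_eq]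
    have h : HasDerivAt (fun x : ℝ => a1 - 2*x) (-2) q := by
      simpa using ((hasDerivAt_id q).const_mul 2).const_sub a1
    exact h.deriv
  have hderiv2R2 : ∀ q : ℝ, 0 < q → deriv (deriv R2) q = -2 := by
    intro q hq
    have hev : deriv R2 =ᶠ[nhds q] fun x => a2 - 2*x := by
      filter_upwards [isOpen_Ioi.mem_nhds hq] with x hx
      exact hderivR2 x hx
    rw [hev.deriv_eq]
    have h : HasDerivAt (fun x : ℝ => a2 - 2*x) (-2) q := by
      simpa using ((hasDerivAt_id q).const_mul 2).const_sub a2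
    exact h.deriv
  -- price path formula
  have hpt : ∀ μ ∈ Set.Icc (0:ℝ) 1, p μ = tf a1 a2 μ := by
    intro μ hμ
    obtain ⟨hmem, heq⟩ := hp μ hμ
    have hpos : 0 < p μ := lt_of_lt_of_le (by linarith) hmem.1
    rw [hderivR1 _ hpos, hderivR2 _ hpos] at heq
    unfold tf
    nlinarith [heq]
  -- antiderivative constants
  have hIa1 : a1/2 ∈ I := hIcc ⟨le_refl _, by linarith⟩
  have hconst : ∀ (CS : ℝ → ℝ) (a c : ℝ), (∀ q ∈ I, HasDerivAt CS (-(a - q + c/q)) q) →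
      ∀ q ∈ I, CS q = Ff a c q + (CS (a1/2) - Ff a c (a1/2)) := by
    intro CS a c hCS q hq
    have key : ∀ x ∈ I, HasDerivWithinAt (fun y => CS y - Ff a c y) ((fun _ => (0:ℝ)) x) I x := by
      intro x hx
      have hx0 : (0:ℝ) < x := hIpos hx
      have := (hCS x hx).sub (Ff_hasDeriv a c x hx0.ne')
      exact this.hasDerivWithinAt.congr_deriv (by simp)
    have hb := hIconv.norm_image_sub_le_of_norm_hasDerivWithin_le (C := 0) key
      (fun x _ => by simp) hIa1 hq
    have : (CS q - Ff a c q) - (CS (a1/2) - Ff a c (a1/2)) = 0 := by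
      have h0 : ‖(CS q - Ff a c q) - (CS (a1/2) - Ff a c (a1/2))‖ ≤ 0 := by
        simpa using hb
      simpa using le_antisymm h0 (norm_nonneg _)
    linarith [this]
  have hCS1' : ∀ q ∈ I, CS1 q = Ff a1 c1 q + (CS1 (a1/2) - Ff a1 c1 (a1/2)) := by
    apply hconst
    intro q hq
    have := hCS1 q hq
    rwa [hD1] at this
  have hCS2' : ∀ q ∈ I, CS2 q = Ff a2 c2 q + (CS2 (a1/2) - Ff a2 c2 (a1/2)) := by
    apply hconst
    intro q hq
    have := hCS2 q hq
    rwa [hD2] at this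
  refine ⟨fun q hq => hR1poly q (ne_of_gt (hIpos hq)),
    fun q hq => hR2poly q (ne_of_gt (hIpos hq)),
    fun q hq => hderiv2R1 q (hIpos hq),
    fun q hq => hderiv2R2 q (hIpos hq),
    by rw [hderivR1 _ (by linarith)]; ring,
    by rw [hderivR2 _ (by linarith)]; ring,
    ?_⟩
  intro α hα
  obtain ⟨hα0, hα1⟩ := hα
  set k1 : ℝ := CS1 (a1/2) - Ff a1 c1 (a1/2) with hk1
  set k2 : ℝ := CS2 (a1/2) - Ff a2 c2 (a1/2) with hk2
  have hconv := gf_convex (a1 := a1) (a2 := a2) (c1 := c1) (c2 := c2) (α := α) k1 k2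
    ha1 ha12 hc1 hc2 hα0 hα1 hgood
  have hWg : ∀ μ ∈ Set.Icc (0:ℝ) 1, W α μ = gf a1 a2 c1 c2 α k1 k2 μ := by
    intro μ hμ
    have hmem := (hp μ hμ).1
    rw [hpt μ hμ] at hmem
    have hqI : tf a1 a2 μ ∈ I := hIcc hmem
    have hq0 : 0 < tf a1 a2 μ := hIpos hqI
    rw [hW α]
    simp only
    rw [hpt μ hμ, hCS1' _ hqI, hCS2' _ hqI, hR1poly _ hq0.ne', hR2poly _ hq0.ne']
    unfold gf af Ff tf
    ring
  refine ⟨hconv.1, ?_⟩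
  intro x hx y hy a b ha hb hab
  have hxy : a • x + b • y ∈ Set.Icc (0:ℝ) 1 := hconv.1 hx hy ha hb hab
  rw [hWg _ hx, hWg _ hy, hWg _ hxy]
  exact hconv.2 hx hy ha hb hab

end Stmt9Aux
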